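/- If a dynamic policy ↣ is globally known—i.e., there is a policy-authority domain P with (GK1) α ⊨ P ↣ u for all α, u, and (GK2) for all α, β, u, v, α|P = β|P implies (α ⊨ u ↣ v iff β ⊨ u ↣ v)—then ↣ is local. In particular, α ∼ᵘⁿʷ_u β implies α|P = β|P for all u. -/
import Mathlib


open Classical

/-- Binary trees over actions, values of the `ta` purge functions. -/
inductive TATree (A : Type) : Type where
  | eps : TATree A
  | node : TATree A → TATree A → A → TATree A

/-- Run a deterministic system along a trace (newest action at the head of the list). -/
def runL {S A : Type} (step : S → A → S) (s0 : S) : List A → S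
  | [] => s0
  | a :: α => step (runL step s0 α) a

/-- The permissive purge function `ta^◇` for a dynamic policy `P`. -/
noncomputable def taD {D A : Type} (dm : A → D) (P : List A → D → D → Prop) :
    List A → D → TATree A
  | [], _ => TATree.eps
  | a :: α, u =>
    if P α (dm a) u then TATree.node (taD dm P α u) (taD dm P α (dm a)) a
    else taD dm P α u

/-- The unwinding relations: smallest family of equivalence relations on traces
satisfying WSC and DLR with respect to the dynamic policy `P`. -/
inductive Unw {D A : Type} (dm : A → D) (P : List A → D → D → Prop) :
    D → List A → List A → Prop where
  | refl (u : D) (α : List A) : Unw dm P u α α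
  | symm {u : D} {α β : List A} : Unw dm P u α β → Unw dm P u β α
  | trans {u : D} {α β γ : List A} : Unw dm P u α β → Unw dm P u β γ → Unw dm P u α γ
  | dlr (u : D) (α : List A) (a : A) : ¬ P α (dm a) u → Unw dm P u (a :: α) α
  | wsc (u : D) {α β : List A} (a : A) :
      Unw dm P u α β → Unw dm P (dm a) α β → Unw dm P u (a :: α) (a :: β)

/-- The prohibitive purge function `ta^□`, whose condition is distributed knowledge
of the policy edge, interpreted over the Kripke structure given by the unwinding relations. -/
noncomputable def taB {D A : Type} (dm : A → D) (P : List A → D → D → Prop) :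
    List A → D → TATree A
  | [], _ => TATree.eps
  | a :: α, u =>
    if (∀ β, Unw dm P u α β → Unw dm P (dm a) α β → P β (dm a) u) then
      TATree.node (taB dm P α u) (taB dm P α (dm a)) a
    else taB dm P α u

/-- a globally known policy is local; in particular unwinding-equivalent
traces have the same subsequence of policy-authority actions. -/
theorem statement_12 {D A : Type} [DecidableEq D] (dm : A → D)
    (P : List A → D → D → Prop) (p : D)
    (hrefl : ∀ α u, P α u u)
    (hGK1 : ∀ (α : List A) u, P α p u)
    (hGK2 : ∀ (α β : List A) u v,
      α.filter (fun a => decide (dm a = p)) = β.filter (fun a => decide (dm a = p)) →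
      (P α u v ↔ P β u v)) :
    (∀ u (α β : List A), Unw dm P u α β →
        α.filter (fun a => decide (dm a = p)) = β.filter (fun a => decide (dm a = p))) ∧
    (∀ u v (α β : List A), Unw dm P u α β → Unw dm P v α β → (P α u v ↔ P β u v)) := by
  have h1 : ∀ u (α β : List A), Unw dm P u α β →
      α.filter (fun a => decide (dm a = p)) = β.filter (fun a => decide (dm a = p)) := by
    intro u α β h
    induction h with
    | refl => rfl
    | symm _ ih => exact ih.symm
    | trans _ _ ih1 ih2 => exact ih1.trans ih2
    | dlr u α a hna =>
      have hne : dm a ≠ p := fun he => hna (he ▸ hGK1 α u)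
      simp [List.filter, hne]
    | wsc u a _ _ ih _ => simp [List.filter, ih]
  exact ⟨h1, fun u v α β h _ => hGK2 α β u v (h1 u α β h)⟩
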